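/- For the actSIS risk-tolerator model, the critical transmission rate β̄_c = δ / max_{p∈[0,1]} (φᵀ(p)(1−p)) satisfies β̄_c/δ > 1; that is, endemic equilibria exist only for β̄ ≥ β̄_c > δ, so the epidemic threshold strictly exceeds that of the SIS model. -/
import Mathlib


/-- actSIS risk-tolerators: the critical transmission rate
β̄_c = δ / max_{p∈[0,1]} φᵀ(p)(1−p) satisfies β̄_c > δ, and endemic
equilibria exist only for β̄ ≥ β̄_c. -/
theorem actSIS_tolerator_threshold (δ : ℝ) (hδ : 0 < δ) (φT : ℝ → ℝ)
    (hcont : ContinuousOn φT (Set.Icc 0 1))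
    (hmono : StrictMonoOn φT (Set.Icc 0 1))
    (hφ0 : φT 0 = 0)
    (hφlt : ∀ p ∈ Set.Ico (0 : ℝ) 1, φT p < 1)
    (hrange : ∀ p ∈ Set.Icc (0 : ℝ) 1, φT p ∈ Set.Icc (0 : ℝ) 1)
    (M βc : ℝ)
    (hM : IsMaxOn (fun p => φT p * (1 - p)) (Set.Icc 0 1) M ∧ M ∈ Set.Icc (0:ℝ) 1)
    (hβc : βc = δ / (φT M * (1 - M))) :
    βc / δ > 1 ∧
    ∀ β : ℝ, 0 < β →
      (∃ p ∈ Set.Ioo (0 : ℝ) 1, φT p * (1 - p) = δ / β) → βc ≤ β := by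
  obtain ⟨hmax, hMmem⟩ := hM
  have hhalf : (1/2 : ℝ) ∈ Set.Icc (0:ℝ) 1 := by norm_num
  have h0 : (0:ℝ) ∈ Set.Icc (0:ℝ) 1 := by norm_num
  have hφhalf : 0 < φT (1/2) := by
    have := hmono h0 hhalf (by norm_num)
    linarith [hφ0 ▸ this]
  have ghalf : 0 < φT (1/2) * (1 - 1/2) := by nlinarith
  have hgMpos : 0 < φT M * (1 - M) := lt_of_lt_of_le ghalf (hmax hhalf)
  have hM1 : M < 1 := by
    by_contra h
    have : M = 1 := le_antisymm hMmem.2 (not_lt.mp h)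
    rw [this] at hgMpos; simp at hgMpos
  have hφM : φT M < 1 := hφlt M ⟨hMmem.1, hM1⟩
  have hφMnn : 0 ≤ φT M := (hrange M hMmem).1
  have hgM1 : φT M * (1 - M) < 1 := by nlinarith [hMmem.1]
  constructor
  · rw [hβc, gt_iff_lt, div_div, one_lt_div (by positivity)]
    nlinarith
  · intro β hβ ⟨p, hp, hgp⟩
    have hpIcc : p ∈ Set.Icc (0:ℝ) 1 := ⟨hp.1.le, hp.2.le⟩
    have : δ / β ≤ φT M * (1 - M) := hgp ▸ hmax hpIcc
    rw [hβc, div_le_iff₀ hgMpos]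
    rw [div_le_iff₀ hβ] at this
    nlinarith
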